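/- Let Ω be a finite connected bipartite subgraph of a weighted graph and p > 1. If f is a maximum eigenfunction of the Dirichlet p-Laplacian on Ω (an eigenfunction pertaining to the largest eigenvalue λ_{m,p}(Ω)), then f(x)·f(y) < 0 for every edge x ∼ y with x, y ∈ Ω. -/

import Mathlib

open scoped BigOperators

namespace PGraph

variable {V : Type*}

/-- The `p`-Dirichlet energy `E_p(u) = (1/2) ∑_{x,y} μ_{xy} |u(y)-u(x)|^p`. -/
noncomputable def energy (μ : V → V → ℝ) (p : ℝ) (u : V → ℝ) : ℝ :=
  (1 / 2) * ∑ᶠ x : V, ∑ᶠ y : V, μ x y * |u y - u x| ^ p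

/-- `‖u‖_{p,Ω}^p = ∑_{x∈Ω} |u(x)|^p ν_x`. -/
noncomputable def pnormP (ν : V → ℝ) (Ω : Finset V) (p : ℝ) (u : V → ℝ) : ℝ :=
  ∑ x ∈ Ω, |u x| ^ p * ν x

/-- The `p`-Laplacian `Δ_p u(x) = (1/ν_x) ∑_y μ_{xy} |u(y)-u(x)|^{p-2}(u(y)-u(x))`. -/
noncomputable def plap (μ : V → V → ℝ) (ν : V → ℝ) (p : ℝ) (u : V → ℝ) (x : V) : ℝ :=
  (1 / ν x) * ∑ᶠ y : V, μ x y * (|u y - u x| ^ (p - 2) * (u y - u x))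

/-- `u` is an eigenfunction of the Dirichlet `p`-Laplacian on `Ω` with eigenvalue `lam`:
`u` vanishes outside `Ω` (zero extension), `u ≢ 0` on `Ω`, and
`Δ_p u = -lam |u|^{p-2} u` on `Ω`. -/
def IsDirEigenfun (μ : V → V → ℝ) (ν : V → ℝ) (Ω : Finset V) (p : ℝ)
    (u : V → ℝ) (lam : ℝ) : Prop :=
  (∀ x, x ∉ Ω → u x = 0) ∧ (∃ x ∈ Ω, u x ≠ 0) ∧
    ∀ x ∈ Ω, plap μ ν p u x = -lam * (|u x| ^ (p - 2) * u x)

/-- The first Dirichlet eigenvalue, via the Rayleigh quotient characterization. -/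
noncomputable def lam1 (μ : V → V → ℝ) (ν : V → ℝ) (Ω : Finset V) (p : ℝ) : ℝ :=
  sInf {t : ℝ | ∃ u : V → ℝ, (∀ x, x ∉ Ω → u x = 0) ∧ (∃ x ∈ Ω, u x ≠ 0) ∧
    t = energy μ p u / pnormP ν Ω p u}

/-- The maximum Dirichlet eigenvalue, via the Rayleigh quotient characterization. -/
noncomputable def lamMax (μ : V → V → ℝ) (ν : V → ℝ) (Ω : Finset V) (p : ℝ) : ℝ :=
  sSup {t : ℝ | ∃ u : V → ℝ, (∀ x, x ∉ Ω → u x = 0) ∧ (∃ x ∈ Ω, u x ≠ 0) ∧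
    t = energy μ p u / pnormP ν Ω p u}

/-- The induced subgraph on `Ω` is connected. -/
def ConnOn (μ : V → V → ℝ) (Ω : Finset V) : Prop :=
  ∀ x ∈ Ω, ∀ y ∈ Ω,
    Relation.ReflTransGen (fun a b => a ∈ Ω ∧ b ∈ Ω ∧ 0 < μ a b) x y

/-- The induced subgraph on `Ω` is bipartite with parts `V₁, V₂`. -/
def BipartiteOn (μ : V → V → ℝ) (Ω : Finset V) : Prop :=
  ∃ V₁ V₂ : Set V, (Ω : Set V) = V₁ ∪ V₂ ∧ Disjoint V₁ V₂ ∧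
    ∀ x ∈ Ω, ∀ y ∈ Ω, 0 < μ x y → ((x ∈ V₁ ∧ y ∈ V₂) ∨ (x ∈ V₂ ∧ y ∈ V₁))

/-- A locally finite weighted graph: symmetric nonnegative edge weights without
self-loops, finitely many neighbours at each vertex, positive vertex weights. -/
structure IsWeightedGraph (μ : V → V → ℝ) (ν : V → ℝ) : Prop where
  symm : ∀ x y, μ x y = μ y x
  nonneg : ∀ x y, 0 ≤ μ x y
  loopless : ∀ x, μ x x = 0
  locFin : ∀ x, (Function.support (μ x)).Finite
  nuPos : ∀ x, 0 < ν x

/-- The edge boundary measure `|∂U|_μ` of a finite vertex set `U`. -/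
noncomputable def bdryWt (μ : V → V → ℝ) (U : Finset V) : ℝ :=
  ∑ x ∈ U, ∑ᶠ y ∈ {z : V | z ∉ U}, μ x y

/-- The Dirichlet Cheeger constant `h_{μ,ν}(Ω) = min_{∅ ≠ U ⊆ Ω} |∂U|_μ / |U|_ν`. -/
noncomputable def cheeger (μ : V → V → ℝ) (ν : V → ℝ) (Ω : Finset V) : ℝ :=
  sInf {t : ℝ | ∃ U : Finset V, U ⊆ Ω ∧ U.Nonempty ∧
    t = bdryWt μ U / ∑ x ∈ U, ν x}

end PGraph

namespace PGraph


section Helpers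

variable {V : Type*} {μ : V → V → ℝ} {ν : V → ℝ} {Ω : Finset V} {p : ℝ}

private lemma phi_mul_self (hp : 1 < p) (a : ℝ) :
    |a| ^ (p - 2) * a * a = |a| ^ p := by
  rcases eq_or_ne a 0 with rfl | ha
  · simp [Real.zero_rpow (show p ≠ 0 by linarith)]
  · have h1 : (0:ℝ) < |a| := abs_pos.mpr ha
    have h2 : |a| ^ p = |a| ^ (p - 2) * |a| ^ (2:ℝ) := by
      rw [← Real.rpow_add h1]; norm_num
    have h3 : |a| ^ (2:ℝ) = a * a := by
      rw [show (2:ℝ) = ((2:ℕ):ℝ) by norm_num, Real.rpow_natCast, sq, abs_mul_abs_self]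
    rw [h2, h3, mul_assoc]

private lemma rpow_abs_sub_le (hp : 0 < p) (a b : ℝ) :
    |a - b| ^ p ≤ 2 ^ p * (|a| ^ p + |b| ^ p) := by
  have h1 : |a - b| ≤ 2 * max |a| |b| := by
    calc |a - b| ≤ |a| + |b| := abs_sub a b
      _ ≤ 2 * max |a| |b| := by
          rw [two_mul]
          exact add_le_add (le_max_left _ _) (le_max_right _ _)
  calc |a - b| ^ p ≤ (2 * max |a| |b|) ^ p :=
        Real.rpow_le_rpow (abs_nonneg _) h1 hp.le
    _ = 2 ^ p * (max |a| |b|) ^ p :=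
        Real.mul_rpow (by norm_num) (le_max_of_le_left (abs_nonneg _))
    _ ≤ 2 ^ p * (|a| ^ p + |b| ^ p) := by
        refine mul_le_mul_of_nonneg_left ?_ (Real.rpow_nonneg (by norm_num) p)
        rcases max_cases |a| |b| with ⟨h, _⟩ | ⟨h, _⟩ <;> rw [h]
        · nlinarith [Real.rpow_nonneg (abs_nonneg b) p]
        · nlinarith [Real.rpow_nonneg (abs_nonneg a) p]

private lemma rpow_gain (hp : 1 < p) {c t : ℝ} (hc : 0 < c) (ht : 0 < t) :
    c ^ (p - 1) * t + c ^ p ≤ (c + t) ^ p := by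
  have h1 : c ^ (p - 1) * (c + t) ≤ (c + t) ^ (p - 1) * (c + t) :=
    mul_le_mul_of_nonneg_right
      (Real.rpow_le_rpow hc.le (by linarith) (by linarith)) (by linarith)
  have h2 : (c + t) ^ (p - 1) * (c + t) = (c + t) ^ p := by
    have := (Real.rpow_add (show (0:ℝ) < c + t by linarith) (p - 1) 1).symm
    rw [Real.rpow_one] at this
    rw [this]; norm_num
  have h3 : c ^ (p - 1) * c = c ^ p := by
    have := (Real.rpow_add hc (p - 1) 1).symm
    rw [Real.rpow_one] at this
    rw [this]; norm_num
  nlinarith [h1, h2, h3]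

private lemma abs_sub_lt_of_mul_pos {a b : ℝ} (h : 0 < a * b) :
    |a - b| < |a| + |b| := by
  rcases mul_pos_iff.mp h with ⟨ha, hb⟩ | ⟨ha, hb⟩
  · rw [abs_of_pos ha, abs_of_pos hb, abs_sub_lt_iff]
    constructor <;> linarith
  · rw [abs_of_neg ha, abs_of_neg hb, abs_sub_lt_iff]
    constructor <;> linarith

private lemma exists_zero_edge {α : Type*} {r : α → α → Prop} {f : α → ℝ} {x y : α}
    (h : Relation.ReflTransGen r x y) :
    f x = 0 → f y ≠ 0 → ∃ a b, r a b ∧ f a = 0 ∧ f b ≠ 0 := by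
  induction h with
  | refl => exact fun hx hy => absurd hx hy
  | @tail b c hxb hbc ih =>
      intro hx hy
      by_cases hb : f b = 0
      · exact ⟨b, c, hbc, hb, hy⟩
      · exact ih hx hb

open scoped Classical in
/-- `Ω` together with all neighbours of `Ω`. -/
noncomputable def bigT (hG : IsWeightedGraph μ ν) (Ω : Finset V) : Finset V :=
  Ω ∪ Ω.biUnion fun x => (hG.locFin x).toFinset

lemma mem_bigT {hG : IsWeightedGraph μ ν} {y : V} :
    y ∈ bigT hG Ω ↔ y ∈ Ω ∨ ∃ x ∈ Ω, μ x y ≠ 0 := by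
  classical
  simp [bigT, Set.Finite.mem_toFinset, Function.mem_support]

lemma subset_bigT (hG : IsWeightedGraph μ ν) : Ω ⊆ bigT hG Ω := fun x hx =>
  mem_bigT.mpr (Or.inl hx)

lemma energy_eq_sum (hG : IsWeightedGraph μ ν) (hp : 0 < p) {u : V → ℝ}
    (hu : ∀ x, x ∉ Ω → u x = 0) :
    energy μ p u
      = (1 / 2) * ∑ x ∈ bigT hG Ω, ∑ y ∈ bigT hG Ω, μ x y * |u y - u x| ^ p := by
  classical
  have hzero : ∀ x y, x ∉ Ω → y ∉ Ω → μ x y * |u y - u x| ^ p = 0 := by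
    intro x y hx hy
    rw [hu x hx, hu y hy]
    simp [Real.zero_rpow hp.ne']
  have hrow : ∀ x, (∑ᶠ y, μ x y * |u y - u x| ^ p)
      = ∑ y ∈ (hG.locFin x).toFinset, μ x y * |u y - u x| ^ p := by
    intro x
    apply finsum_eq_finset_sum_of_support_subset
    intro y hy
    rw [Set.Finite.coe_toFinset]
    simp only [Function.mem_support] at hy ⊢
    exact fun h => hy (by rw [h, zero_mul])
  have houter : (Function.support fun x => ∑ᶠ y, μ x y * |u y - u x| ^ p)
      ⊆ (bigT hG Ω : Set V) := by
    intro x hx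
    simp only [Function.mem_support] at hx
    rw [hrow] at hx
    by_contra hxT
    apply hx
    apply Finset.sum_eq_zero
    intro y hy
    have hxΩ : x ∉ Ω := fun h => hxT (Finset.mem_coe.mp (subset_bigT hG h))
    by_cases hyΩ : y ∈ Ω
    · exfalso
      apply hxT
      refine Finset.mem_coe.mpr (mem_bigT.mpr (Or.inr ⟨y, hyΩ, ?_⟩))
      rw [← hG.symm]
      simpa [Set.Finite.mem_toFinset, Function.mem_support] using hy
    · exact hzero x y hxΩ hyΩ
  unfold energy
  rw [finsum_eq_finset_sum_of_support_subset _ houter]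
  congr 1
  refine Finset.sum_congr rfl fun x hxT => ?_
  rw [hrow]
  have hv1 : ∀ y ∈ (hG.locFin x).toFinset ∪ bigT hG Ω,
      y ∉ (hG.locFin x).toFinset → μ x y * |u y - u x| ^ p = 0 := by
    intro y _ hy
    have : μ x y = 0 := by
      by_contra h
      exact hy ((hG.locFin x).mem_toFinset.mpr h)
    rw [this, zero_mul]
  have hv2 : ∀ y ∈ (hG.locFin x).toFinset ∪ bigT hG Ω,
      y ∉ bigT hG Ω → μ x y * |u y - u x| ^ p = 0 := by
    intro y _ hy
    have hyΩ : y ∉ Ω := fun h => hy (subset_bigT hG h)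
    by_cases hxΩ : x ∈ Ω
    · have : μ x y = 0 := by
        by_contra h
        exact hy (mem_bigT.mpr (Or.inr ⟨x, hxΩ, h⟩))
      rw [this, zero_mul]
    · exact hzero x y hxΩ hyΩ
  calc ∑ y ∈ (hG.locFin x).toFinset, μ x y * |u y - u x| ^ p
      = ∑ y ∈ (hG.locFin x).toFinset ∪ bigT hG Ω, μ x y * |u y - u x| ^ p :=
        Finset.sum_subset Finset.subset_union_left hv1
    _ = ∑ y ∈ bigT hG Ω, μ x y * |u y - u x| ^ p :=
        (Finset.sum_subset Finset.subset_union_right hv2).symm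

lemma plap_sum (hG : IsWeightedGraph μ ν) {x : V} (hx : x ∈ Ω) (u : V → ℝ) :
    plap μ ν p u x
      = (1 / ν x) * ∑ y ∈ bigT hG Ω, μ x y * (|u y - u x| ^ (p - 2) * (u y - u x)) := by
  unfold plap
  congr 1
  apply finsum_eq_finset_sum_of_support_subset
  intro y hy
  simp only [Function.mem_support] at hy
  have hμ : μ x y ≠ 0 := fun h => hy (by rw [h, zero_mul])
  exact Finset.mem_coe.mpr (mem_bigT.mpr (Or.inr ⟨x, hx, hμ⟩))

lemma pnormP_pos (hG : IsWeightedGraph μ ν) {u : V → ℝ}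
    (h : ∃ x ∈ Ω, u x ≠ 0) : 0 < pnormP ν Ω p u := by
  obtain ⟨x, hx, hux⟩ := h
  refine Finset.sum_pos' (fun y _ => mul_nonneg (Real.rpow_nonneg (abs_nonneg _) _)
    (hG.nuPos y).le) ⟨x, hx, ?_⟩
  exact mul_pos (Real.rpow_pos_of_pos (abs_pos.mpr hux) p) (hG.nuPos x)

lemma energy_eq_lam_mul (hG : IsWeightedGraph μ ν) (hp : 1 < p) {f : V → ℝ} {lam : ℝ}
    (hf : IsDirEigenfun μ ν Ω p f lam) :
    energy μ p f = lam * pnormP ν Ω p f := by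
  classical
  obtain ⟨hsupp, -, heig⟩ := hf
  have hp0 : 0 < p := by linarith
  set T := bigT hG Ω with hT
  have hΩT : Ω ⊆ T := subset_bigT hG
  have hrowEq : ∀ x ∈ Ω,
      (∑ y ∈ T, μ x y * (|f y - f x| ^ (p - 2) * (f y - f x)))
        = ν x * (-lam * (|f x| ^ (p - 2) * f x)) := by
    intro x hx
    have h1 := heig x hx
    rw [plap_sum hG hx] at h1
    have hν : ν x ≠ 0 := (hG.nuPos x).ne'
    rw [← h1]
    field_simp
    rfl
  set A : ℝ := ∑ x ∈ T, ∑ y ∈ T, μ x y * (|f y - f x| ^ (p - 2) * (f y - f x)) * f x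
    with hA
  have hA1 : A = -lam * pnormP ν Ω p f := by
    have e1 : A = ∑ x ∈ T,
        (∑ y ∈ T, μ x y * (|f y - f x| ^ (p - 2) * (f y - f x))) * f x := by
      rw [hA]
      exact Finset.sum_congr rfl fun x _ => (Finset.sum_mul _ _ _).symm
    have e2 : ∑ x ∈ T,
        (∑ y ∈ T, μ x y * (|f y - f x| ^ (p - 2) * (f y - f x))) * f x
        = ∑ x ∈ Ω,
        (∑ y ∈ T, μ x y * (|f y - f x| ^ (p - 2) * (f y - f x))) * f x := by
      refine (Finset.sum_subset hΩT ?_).symm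
      intro x _ hx
      rw [hsupp x hx, mul_zero]
    rw [e1, e2]
    unfold pnormP
    rw [Finset.mul_sum]
    refine Finset.sum_congr rfl fun x hx => ?_
    rw [hrowEq x hx]
    have := phi_mul_self hp (f x)
    linear_combination (-lam * ν x) * this
  have hA2 : (∑ x ∈ T, ∑ y ∈ T, μ x y * (|f y - f x| ^ (p - 2) * (f y - f x)) * f y)
      = -A := by
    rw [Finset.sum_comm, hA, ← Finset.sum_neg_distrib]
    refine Finset.sum_congr rfl fun a _ => ?_
    rw [← Finset.sum_neg_distrib]
    refine Finset.sum_congr rfl fun b _ => ?_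
    rw [hG.symm b a, abs_sub_comm (f a) (f b)]
    ring
  have hA3 : (∑ x ∈ T, ∑ y ∈ T, μ x y * (|f y - f x| ^ (p - 2) * (f y - f x)) * f y)
      - A = ∑ x ∈ T, ∑ y ∈ T, μ x y * |f y - f x| ^ p := by
    rw [hA, ← Finset.sum_sub_distrib]
    refine Finset.sum_congr rfl fun x _ => ?_
    rw [← Finset.sum_sub_distrib]
    refine Finset.sum_congr rfl fun y _ => ?_
    have := phi_mul_self hp (f y - f x)
    linear_combination (μ x y) * this
  have hE := energy_eq_sum hG hp0 hsupp
  rw [hE, ← hA3, hA2, hA1]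
  ring

lemma rayleigh_bddAbove (hG : IsWeightedGraph μ ν) (hp : 1 < p) :
    BddAbove {t : ℝ | ∃ u : V → ℝ, (∀ x, x ∉ Ω → u x = 0) ∧ (∃ x ∈ Ω, u x ≠ 0) ∧
      t = energy μ p u / pnormP ν Ω p u} := by
  classical
  have hp0 : 0 < p := by linarith
  set T := bigT hG Ω with hT
  set C0 : ℝ := ∑ x ∈ Ω, (∑ y ∈ T, μ x y) / ν x with hC0
  refine ⟨2 ^ p * C0, ?_⟩
  rintro t ⟨u, hu, hu0, rfl⟩
  have hN : 0 < pnormP ν Ω p u := pnormP_pos hG hu0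
  rw [div_le_iff₀ hN]
  have key : ∀ x ∈ T, ∑ y ∈ T, μ x y * |u y - u x| ^ p
      ≤ ∑ y ∈ T, (2 ^ p * (μ x y * |u y| ^ p) + 2 ^ p * (μ x y * |u x| ^ p)) := by
    intro x _
    refine Finset.sum_le_sum fun y _ => ?_
    calc μ x y * |u y - u x| ^ p
        ≤ μ x y * (2 ^ p * (|u y| ^ p + |u x| ^ p)) :=
          mul_le_mul_of_nonneg_left (rpow_abs_sub_le hp0 (u y) (u x)) (hG.nonneg x y)
      _ = 2 ^ p * (μ x y * |u y| ^ p) + 2 ^ p * (μ x y * |u x| ^ p) := by ring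
  have hS1 : (∑ x ∈ T, ∑ y ∈ T, μ x y * |u y| ^ p)
      = ∑ x ∈ T, |u x| ^ p * ∑ y ∈ T, μ x y := by
    rw [Finset.sum_comm]
    refine Finset.sum_congr rfl fun y _ => ?_
    rw [Finset.mul_sum]
    refine Finset.sum_congr rfl fun x _ => ?_
    rw [hG.symm y x]; ring
  have hS2 : (∑ x ∈ T, ∑ y ∈ T, μ x y * |u x| ^ p)
      = ∑ x ∈ T, |u x| ^ p * ∑ y ∈ T, μ x y := by
    refine Finset.sum_congr rfl fun x _ => ?_
    rw [Finset.mul_sum]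
    refine Finset.sum_congr rfl fun y _ => ?_
    ring
  have hrestr : (∑ x ∈ T, |u x| ^ p * ∑ y ∈ T, μ x y)
      = ∑ x ∈ Ω, |u x| ^ p * ∑ y ∈ T, μ x y := by
    refine (Finset.sum_subset (subset_bigT hG) ?_).symm
    intro x _ hx
    rw [hu x hx]
    simp [Real.zero_rpow hp0.ne']
  have hD : ∀ x ∈ Ω, (∑ y ∈ T, μ x y) ≤ C0 * ν x := by
    intro x hx
    have h1 : (∑ y ∈ T, μ x y) / ν x ≤ C0 :=
      Finset.single_le_sum (f := fun x => (∑ y ∈ T, μ x y) / ν x)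
        (fun y _ => div_nonneg (Finset.sum_nonneg fun z _ => hG.nonneg y z)
          (hG.nuPos y).le) hx
    rw [div_le_iff₀ (hG.nuPos x)] at h1
    exact h1
  have hfinal : (∑ x ∈ Ω, |u x| ^ p * ∑ y ∈ T, μ x y) ≤ C0 * pnormP ν Ω p u := by
    unfold pnormP
    rw [Finset.mul_sum]
    refine Finset.sum_le_sum fun x hx => ?_
    calc |u x| ^ p * ∑ y ∈ T, μ x y ≤ |u x| ^ p * (C0 * ν x) :=
          mul_le_mul_of_nonneg_left (hD x hx) (Real.rpow_nonneg (abs_nonneg _) p)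
      _ = C0 * (|u x| ^ p * ν x) := by ring
  have h2p : (0:ℝ) ≤ 2 ^ p := Real.rpow_nonneg (by norm_num) p
  have hsum : (∑ x ∈ T, ∑ y ∈ T, μ x y * |u y - u x| ^ p)
      ≤ 2 ^ p * (2 * (C0 * pnormP ν Ω p u)) := by
    calc (∑ x ∈ T, ∑ y ∈ T, μ x y * |u y - u x| ^ p)
        ≤ ∑ x ∈ T, ∑ y ∈ T,
            (2 ^ p * (μ x y * |u y| ^ p) + 2 ^ p * (μ x y * |u x| ^ p)) :=
          Finset.sum_le_sum key
      _ = 2 ^ p * ((∑ x ∈ T, ∑ y ∈ T, μ x y * |u y| ^ p)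
            + ∑ x ∈ T, ∑ y ∈ T, μ x y * |u x| ^ p) := by
          simp only [Finset.mul_sum, mul_add, Finset.sum_add_distrib]
      _ ≤ 2 ^ p * (2 * (C0 * pnormP ν Ω p u)) := by
          refine mul_le_mul_of_nonneg_left ?_ h2p
          rw [hS1, hS2, hrestr]
          linarith [hfinal]
  rw [energy_eq_sum hG hp0 hu]
  nlinarith [hsum]

lemma le_lamMax (hG : IsWeightedGraph μ ν) (hp : 1 < p) {u : V → ℝ}
    (hu : ∀ x, x ∉ Ω → u x = 0) (hu0 : ∃ x ∈ Ω, u x ≠ 0) :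
    energy μ p u / pnormP ν Ω p u ≤ lamMax μ ν Ω p :=
  le_csSup (rayleigh_bddAbove hG hp) ⟨u, hu, hu0, rfl⟩

end Helpers

set_option maxHeartbeats 2000000 in
/-- on a finite connected bipartite subgraph `Ω`, a maximum eigenfunction of
the Dirichlet `p`-Laplacian (`p > 1`) changes sign along every edge of `Ω`. -/
theorem max_eigenfun_sign {V : Type*} {μ : V → V → ℝ} {ν : V → ℝ}
    (hG : IsWeightedGraph μ ν) {Ω : Finset V} (hconn : ConnOn μ Ω)
    (hbip : BipartiteOn μ Ω) {p : ℝ} (hp : 1 < p) {f : V → ℝ}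
    (hf : IsDirEigenfun μ ν Ω p f (lamMax μ ν Ω p)) :
    ∀ x ∈ Ω, ∀ y ∈ Ω, 0 < μ x y → f x * f y < 0 := by
  classical
  obtain ⟨V₁, V₂, hV, hdisj, hbi⟩ := hbip
  obtain ⟨hsupp, hnt, heig⟩ := hf
  have hp0 : 0 < p := by linarith
  set T := bigT hG Ω with hTdef
  have hΩT : Ω ⊆ T := subset_bigT hG
  set lam := lamMax μ ν Ω p with hlamdef
  set N := pnormP ν Ω p f with hNdef
  have hNpos : 0 < N := pnormP_pos hG hnt
  have hEf : energy μ p f = lam * N := energy_eq_lam_mul hG hp ⟨hsupp, hnt, heig⟩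
  -- the sign function and the folded function g
  set e : V → ℝ := fun x => if x ∈ V₁ then 1 else -1 with hedef
  have habse : ∀ x, |e x| = 1 := by
    intro x; by_cases h : x ∈ V₁ <;> simp [hedef, h]
  set g : V → ℝ := fun x => e x * |f x| with hgdef
  have hgabs : ∀ x, |g x| = |f x| := by
    intro x
    simp only [hgdef]
    rw [abs_mul, habse, one_mul, abs_abs]
  have hg0 : ∀ x, x ∉ Ω → g x = 0 := by
    intro x hx
    rw [show g x = e x * |f x| from rfl, hsupp x hx]
    simp
  have hgN : pnormP ν Ω p g = N := by
    rw [hNdef]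
    unfold pnormP
    exact Finset.sum_congr rfl fun x _ => by rw [hgabs]
  have hgnt : ∃ x ∈ Ω, g x ≠ 0 := by
    obtain ⟨x, hx, hfx⟩ := hnt
    refine ⟨x, hx, fun h => hfx ?_⟩
    have := hgabs x
    rw [h, abs_zero] at this
    exact abs_eq_zero.mp this.symm
  have hsign : ∀ x ∈ Ω, ∀ y ∈ Ω, 0 < μ x y → e y = - e x := by
    intro x hx y hy hμ
    rcases hbi x hx y hy hμ with ⟨h1, h2⟩ | ⟨h1, h2⟩
    · have h3 : y ∉ V₁ := fun hc => Set.disjoint_left.mp hdisj hc h2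
      simp [hedef, h1, h3]
    · have h3 : x ∉ V₁ := fun hc => Set.disjoint_left.mp hdisj hc h1
      simp [hedef, h2, h3]
  have hedgeabs : ∀ x ∈ Ω, ∀ y ∈ Ω, 0 < μ x y → |g y - g x| = |f x| + |f y| := by
    intro x hx y hy hμ
    have hs := hsign x hx y hy hμ
    have h1 : g y - g x = -(e x) * (|f y| + |f x|) := by
      rw [show g y = e y * |f y| from rfl, show g x = e x * |f x| from rfl, hs]; ring
    rw [h1, abs_mul, abs_neg, habse, one_mul,
      abs_of_nonneg (by positivity : (0:ℝ) ≤ |f y| + |f x|)]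
    ring
  -- termwise comparison of energies of f and g
  have hterm : ∀ x y, μ x y * |f y - f x| ^ p ≤ μ x y * |g y - g x| ^ p := by
    intro x y
    rcases eq_or_lt_of_le (hG.nonneg x y) with h | hμ
    · rw [← h]; simp
    by_cases hx : x ∈ Ω
    · by_cases hy : y ∈ Ω
      · refine mul_le_mul_of_nonneg_left ?_ hμ.le
        refine Real.rpow_le_rpow (abs_nonneg _) ?_ hp0.le
        rw [hedgeabs x hx y hy hμ, add_comm]
        exact abs_sub _ _
      · rw [hsupp y hy, hg0 y hy, zero_sub, zero_sub, abs_neg, abs_neg, hgabs]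
    · by_cases hy : y ∈ Ω
      · rw [hsupp x hx, hg0 x hx, sub_zero, sub_zero, hgabs]
      · rw [hsupp x hx, hg0 x hx, hsupp y hy, hg0 y hy]
  have hEg_ge : energy μ p f ≤ energy μ p g := by
    rw [energy_eq_sum hG hp0 hsupp, energy_eq_sum hG hp0 hg0]
    refine mul_le_mul_of_nonneg_left ?_ (by norm_num)
    exact Finset.sum_le_sum fun x _ => Finset.sum_le_sum fun y _ => hterm x y
  have hEg_le : energy μ p g ≤ lam * N := by
    have h := le_lamMax hG hp hg0 hgnt
    rw [hgN, ← hlamdef] at h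
    calc energy μ p g = energy μ p g / N * N := by field_simp
      _ ≤ lam * N := mul_le_mul_of_nonneg_right h hNpos.le
  have hEg : energy μ p g = lam * N := le_antisymm hEg_le (hEf ▸ hEg_ge)
  -- Step 1: f is nowhere zero on Ω
  have hfne : ∀ z ∈ Ω, f z ≠ 0 := by
    intro z hzΩ hz0
    obtain ⟨x₀, hx₀, hfx₀⟩ := hnt
    obtain ⟨a, b, ⟨haΩ, hbΩ, hab⟩, hfa, hfb⟩ :=
      exists_zero_edge (hconn z hzΩ x₀ hx₀) hz0 hfx₀
    set c := |f b| with hcdef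
    have hc : 0 < c := abs_pos.mpr hfb
    set K := (1 / 2) * μ a b * c ^ (p - 1) with hK
    have hcp : 0 < c ^ (p - 1) := Real.rpow_pos_of_pos hc _
    have hKpos : 0 < K := by rw [hK]; positivity
    have hνa := hG.nuPos a
    obtain ⟨t, ht, htkey⟩ : ∃ t : ℝ, 0 < t ∧ lam * ν a * t ^ p < K * t := by
      rcases le_or_gt lam 0 with hl | hl
      · refine ⟨1, one_pos, ?_⟩
        rw [Real.one_rpow, mul_one, mul_one]
        calc lam * ν a ≤ 0 := mul_nonpos_of_nonpos_of_nonneg hl hνa.le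
          _ < K := hKpos
      · set t := (K / (2 * lam * ν a)) ^ (p - 1)⁻¹ with htdef
        have hbase : 0 < K / (2 * lam * ν a) := by positivity
        have ht : 0 < t := Real.rpow_pos_of_pos hbase _
        refine ⟨t, ht, ?_⟩
        have htp : t ^ (p - 1) = K / (2 * lam * ν a) :=
          Real.rpow_inv_rpow hbase.le (sub_ne_zero.mpr hp.ne')
        have htpp : t ^ p = t ^ (p - 1) * t := by
          have h2 := Real.rpow_add ht (p - 1) 1
          rw [Real.rpow_one, sub_add_cancel] at h2
          exact h2
        rw [htpp, htp]
        have heq : lam * ν a * (K / (2 * lam * ν a) * t) = K * t / 2 := by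
          field_simp
        rw [heq]
        nlinarith [mul_pos hKpos ht]
    set ea := e a with headef
    set w : V → ℝ := fun x => if x = a then ea * t else g x with hwdef
    have hwa : w a = ea * t := by rw [hwdef]; simp
    have hwother : ∀ x, x ≠ a → w x = g x := by
      intro x hx; rw [hwdef]; simp [hx]
    have hba : b ≠ a := fun h => hfb (h ▸ hfa)
    have hw0 : ∀ x, x ∉ Ω → w x = 0 := by
      intro x hx
      rw [hwother x (fun h => hx (h ▸ haΩ)), hg0 x hx]
    have hgb : g b ≠ 0 := by
      intro h
      apply hfb
      have := hgabs b
      rw [h, abs_zero] at this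
      exact abs_eq_zero.mp this.symm
    have hwnt : ∃ x ∈ Ω, w x ≠ 0 := ⟨b, hbΩ, by rw [hwother b hba]; exact hgb⟩
    have hga : g a = 0 := by
      rw [show g a = e a * |f a| from rfl, hfa]
      simp
    have hwap : |w a| ^ p = t ^ p := by
      rw [hwa, abs_mul, habse, one_mul, abs_of_pos ht]
    have hwN : pnormP ν Ω p w = N + t ^ p * ν a := by
      have h1 : pnormP ν Ω p w = |w a| ^ p * ν a + ∑ x ∈ Ω.erase a, |g x| ^ p * ν x := by
        unfold pnormP
        rw [← Finset.add_sum_erase _ _ haΩ]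
        congr 1
        exact Finset.sum_congr rfl fun x hx => by
          rw [hwother x (Finset.ne_of_mem_erase hx)]
      have h2 : N = |g a| ^ p * ν a + ∑ x ∈ Ω.erase a, |g x| ^ p * ν x := by
        rw [← hgN]
        unfold pnormP
        rw [← Finset.add_sum_erase _ _ haΩ]
      rw [h1, h2, hga, abs_zero, Real.zero_rpow hp0.ne', hwap]
      ring
    -- sign structure around a
    have hopp : ∀ y, μ a y ≠ 0 → g y * ea ≤ 0 := by
      intro y hμy
      by_cases hyΩ : y ∈ Ω
      · have hμpos : 0 < μ a y := (hG.nonneg a y).lt_of_ne (Ne.symm hμy)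
        have hs := hsign a haΩ y hyΩ hμpos
        have h1 : g y = -ea * |f y| := by
          rw [show g y = e y * |f y| from rfl, hs, headef]
        rw [h1]
        have h2 : ea * ea = 1 := by
          rw [← abs_mul_abs_self, headef, habse]; norm_num
        nlinarith [abs_nonneg (f y)]
      · rw [hg0 y hyΩ, zero_mul]
    have hea : ea = 1 ∨ ea = -1 := by
      have := habse a
      rw [← headef] at this
      rcases abs_eq (by norm_num : (0:ℝ) ≤ 1) |>.mp this with h | h
      · exact Or.inl h
      · exact Or.inr h
    have habs_shift : ∀ y, μ a y ≠ 0 → |g y - ea * t| = |g y| + t := by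
      intro y hμy
      have h := hopp y hμy
      rcases hea with h1 | h1
      · rw [h1] at h ⊢
        rw [mul_one] at h
        rw [one_mul, abs_of_nonpos (by linarith : g y - t ≤ 0), abs_of_nonpos h]
        ring
      · rw [h1] at h ⊢
        have h' : 0 ≤ g y := by nlinarith
        rw [show g y - -1 * t = g y + t by ring,
          abs_of_nonneg (by linarith : (0:ℝ) ≤ g y + t), abs_of_nonneg h']
    -- termwise comparison of energies of g and w
    have hwterm : ∀ x y, μ x y * |g y - g x| ^ p ≤ μ x y * |w y - w x| ^ p := by
      intro x y
      rcases eq_or_ne (μ x y) 0 with h0 | hμn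
      · rw [h0]; simp
      by_cases hx : x = a
      · rw [hx] at hμn ⊢
        by_cases hy : y = a
        · rw [hy] at hμn
          exact absurd (hG.loopless a) hμn
        · rw [hwother y hy, hwa, hga, sub_zero]
          refine mul_le_mul_of_nonneg_left ?_ (hG.nonneg _ _)
          refine Real.rpow_le_rpow (abs_nonneg _) ?_ hp0.le
          rw [habs_shift y hμn]
          linarith
      · by_cases hy : y = a
        · rw [hy] at hμn ⊢
          rw [hwother x hx, hwa, hga, zero_sub, abs_neg]
          have hμn' : μ a x ≠ 0 := by rw [hG.symm]; exact hμn
          refine mul_le_mul_of_nonneg_left ?_ (hG.nonneg _ _)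
          refine Real.rpow_le_rpow (abs_nonneg _) ?_ hp0.le
          rw [abs_sub_comm, habs_shift x hμn']
          linarith
        · rw [hwother x hx, hwother y hy]
    have hgain : μ a b * |g b - g a| ^ p + 2 * K * t ≤ μ a b * |w b - w a| ^ p := by
      rw [hga, sub_zero, hwother b hba, hwa]
      have h1 : |g b - ea * t| = c + t := by
        rw [habs_shift b hab.ne', hgabs]
      have h2 : |g b| = c := hgabs b
      rw [h1, h2]
      have h3 := rpow_gain hp hc ht
      have h4 : 2 * K * t = μ a b * (c ^ (p - 1) * t) := by rw [hK]; ring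
      nlinarith [mul_le_mul_of_nonneg_left h3 hab.le]
    have haT : a ∈ T := hΩT haΩ
    have hbT : b ∈ T := hΩT hbΩ
    have hDnn : ∀ x y, 0 ≤ μ x y * |w y - w x| ^ p - μ x y * |g y - g x| ^ p :=
      fun x y => sub_nonneg.mpr (hwterm x y)
    have hsum1 : 2 * K * t
        ≤ ∑ y ∈ T, (μ a y * |w y - w a| ^ p - μ a y * |g y - g a| ^ p) := by
      calc 2 * K * t ≤ μ a b * |w b - w a| ^ p - μ a b * |g b - g a| ^ p := by
            linarith [hgain]
        _ ≤ _ := Finset.single_le_sum (fun y _ => hDnn a y) hbT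
    have hsum2 : 2 * K * t
        ≤ ∑ x ∈ T, ∑ y ∈ T, (μ x y * |w y - w x| ^ p - μ x y * |g y - g x| ^ p) := by
      calc 2 * K * t ≤ _ := hsum1
        _ ≤ _ := Finset.single_le_sum
            (fun x _ => Finset.sum_nonneg fun y _ => hDnn x y) haT
    have hsum3 : (∑ x ∈ T, ∑ y ∈ T, (μ x y * |w y - w x| ^ p - μ x y * |g y - g x| ^ p))
        = (∑ x ∈ T, ∑ y ∈ T, μ x y * |w y - w x| ^ p)
          - ∑ x ∈ T, ∑ y ∈ T, μ x y * |g y - g x| ^ p := by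
      simp only [Finset.sum_sub_distrib]
    have hEw : lam * N + K * t ≤ energy μ p w := by
      have hEwsum := energy_eq_sum hG hp0 hw0
      have hEgsum := energy_eq_sum hG hp0 hg0
      rw [← hTdef] at hEwsum hEgsum
      rw [hsum3] at hsum2
      rw [hEwsum]
      rw [hEgsum] at hEg
      linarith
    have hle := le_lamMax hG hp hw0 hwnt
    rw [← hlamdef] at hle
    have hwNpos : 0 < pnormP ν Ω p w := pnormP_pos hG hwnt
    have hle2 : energy μ p w ≤ lam * (N + t ^ p * ν a) := by
      rw [← hwN]
      exact (div_le_iff₀ hwNpos).mp hle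
    nlinarith [mul_pos hKpos ht]
  -- Step 2: conclude
  intro x hx y hy hμ
  have hfx := hfne x hx
  have hfy := hfne y hy
  rcases lt_trichotomy (f x * f y) 0 with h | h | h
  · exact h
  · exact absurd h (mul_ne_zero hfx hfy)
  · exfalso
    have hstrict : μ x y * |f y - f x| ^ p < μ x y * |g y - g x| ^ p := by
      refine mul_lt_mul_of_pos_left ?_ hμ
      refine Real.rpow_lt_rpow (abs_nonneg _) ?_ hp0
      rw [hedgeabs x hx y hy hμ, add_comm]
      exact abs_sub_lt_of_mul_pos (by rw [mul_comm] at h; exact h)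
    have hxT : x ∈ T := hΩT hx
    have hyT : y ∈ T := hΩT hy
    have hDnn : ∀ a b, 0 ≤ μ a b * |g b - g a| ^ p - μ a b * |f b - f a| ^ p :=
      fun a b => sub_nonneg.mpr (hterm a b)
    have hsum1 : 0 < ∑ b ∈ T, (μ x b * |g b - g x| ^ p - μ x b * |f b - f x| ^ p) := by
      calc (0:ℝ) < μ x y * |g y - g x| ^ p - μ x y * |f y - f x| ^ p := by
            linarith [hstrict]
        _ ≤ _ := Finset.single_le_sum (fun b _ => hDnn x b) hyT
    have hsum2 : 0 < ∑ a ∈ T, ∑ b ∈ T, (μ a b * |g b - g a| ^ p - μ a b * |f b - f a| ^ p) := by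
      calc (0:ℝ) < _ := hsum1
        _ ≤ _ := Finset.single_le_sum
            (fun a _ => Finset.sum_nonneg fun b _ => hDnn a b) hxT
    have hsum3 : (∑ a ∈ T, ∑ b ∈ T, (μ a b * |g b - g a| ^ p - μ a b * |f b - f a| ^ p))
        = (∑ a ∈ T, ∑ b ∈ T, μ a b * |g b - g a| ^ p)
          - ∑ a ∈ T, ∑ b ∈ T, μ a b * |f b - f a| ^ p := by
      simp only [Finset.sum_sub_distrib]
    have hEfsum := energy_eq_sum hG hp0 hsupp
    have hEgsum := energy_eq_sum hG hp0 hg0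
    rw [← hTdef] at hEfsum hEgsum
    rw [hsum3] at hsum2
    rw [hEfsum] at hEf
    rw [hEgsum] at hEg
    linarith

end PGraph
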